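/- Orthogonality of distinct IFDMA streams: let M = 2^m, and consider two IFDMA streams with parameters (N_1, d_1) and (N_2, d_2), N_i = 2^{n_i}, 0 ≤ d_i < M/N_i, whose subcarrier sets S_i = {d_i + j·M/N_i : j = 0,...,N_i−1} are disjoint. Then for arbitrary symbol blocks x_1 ∈ ℂ^{N_1}, x_2 ∈ ℂ^{N_2}, the time-domain signals x'_1[ℓ] = (N_1/M)e^{2πiℓd_1/M}x_1[ℓ mod N_1] and x'_2[ℓ] = (N_2/M)e^{2πiℓd_2/M}x_2[ℓ mod N_2] are orthogonal: Σ_{ℓ=0}^{M−1} x'_1[ℓ]·conj(x'_2[ℓ]) = 0. -/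

import Mathlib

open Finset

lemma geom_exp_zero (K : ℕ) (t : ℤ) (hK : 0 < K) (ht : ¬ ((K : ℤ) ∣ t)) :
    ∑ b ∈ Finset.range K, Complex.exp (2 * Real.pi * Complex.I * t / K) ^ b = 0 := by
  have hKC : (K : ℂ) ≠ 0 := Nat.cast_ne_zero.mpr hK.ne'
  have h2 : (2 * (Real.pi : ℂ) * Complex.I) ≠ 0 := by
    simp [Real.pi_ne_zero, Complex.I_ne_zero, Complex.ofReal_ne_zero]
  have hζ1 : Complex.exp (2 * Real.pi * Complex.I * t / K) ≠ 1 := by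
    intro h
    rw [Complex.exp_eq_one_iff] at h
    obtain ⟨n, hn⟩ := h
    refine ht ⟨n, ?_⟩
    have h3 : (2 * (Real.pi : ℂ) * Complex.I) * (t : ℂ)
        = (2 * (Real.pi : ℂ) * Complex.I) * ((K : ℂ) * n) := by
      field_simp at hn
      linear_combination (2 * (Real.pi : ℂ) * Complex.I) * hn
    have h4 : (t : ℂ) = ((K * n : ℤ) : ℂ) := by
      have := mul_left_cancel₀ h2 h3
      push_cast
      exact this
    exact_mod_cast h4
  rw [geom_sum_eq hζ1, ← Complex.exp_nat_mul]
  have h5 : (K : ℂ) * (2 * Real.pi * Complex.I * t / K) = t * (2 * Real.pi * Complex.I) := by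
    field_simp
  rw [h5, Complex.exp_int_mul_two_pi_mul_I]
  simp

lemma aux13 (m n₁ n₂ : ℕ) (h₁ : n₁ ≤ m) (h₂ : n₂ ≤ m) (hle : n₁ ≤ n₂)
    (d₁ d₂ : ℕ) (hd₁ : d₁ < 2 ^ (m - n₁)) (hd₂ : d₂ < 2 ^ (m - n₂))
    (hdisj : Disjoint
      ((Finset.range (2 ^ n₁)).image (fun j => d₁ + j * 2 ^ (m - n₁)))
      ((Finset.range (2 ^ n₂)).image (fun j => d₂ + j * 2 ^ (m - n₂))))
    (x₁ x₂ : ℕ → ℂ) :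
    ∑ ℓ ∈ Finset.range (2 ^ m),
      (((2 ^ n₁ : ℂ) / (2 ^ m : ℂ)) *
          Complex.exp (2 * Real.pi * Complex.I * ℓ * d₁ / ((2 ^ m : ℕ) : ℂ)) *
          x₁ (ℓ % 2 ^ n₁)) *
        (starRingEnd ℂ)
          (((2 ^ n₂ : ℂ) / (2 ^ m : ℂ)) *
            Complex.exp (2 * Real.pi * Complex.I * ℓ * d₂ / ((2 ^ m : ℕ) : ℂ)) *
            x₂ (ℓ % 2 ^ n₂)) = 0 := by
  set K := 2 ^ (m - n₂) with hKdef
  set N := 2 ^ n₂ with hNdef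
  have hKpos : 0 < K := by rw [hKdef]; positivity
  have hNpos : 0 < N := by rw [hNdef]; positivity
  -- non-congruence of d₁ and d₂ mod K
  have ht : ¬ ((K : ℤ) ∣ ((d₁ : ℤ) - d₂)) := by
    intro hdvd
    obtain ⟨c, hc⟩ := hdvd
    have hc0 : 0 ≤ c := by
      rcases le_or_gt 0 c with h | h
      · exact h
      · exfalso
        have : (K : ℤ) * c ≤ -K := by
          calc (K : ℤ) * c ≤ (K : ℤ) * (-1) := by
                apply mul_le_mul_of_nonneg_left (by omega) (by positivity)
            _ = -K := by ring
        have hd2K : (d₂ : ℤ) < K := by exact_mod_cast hd₂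
        omega
    set k := c.toNat with hk
    have hck : (c : ℤ) = k := (Int.toNat_of_nonneg hc0).symm
    have hd1Z : (d₁ : ℤ) = d₂ + (K : ℤ) * c := by omega
    have hd1eq : d₁ = d₂ + k * K := by
      have : (d₁ : ℤ) = (d₂ : ℤ) + (k : ℤ) * K := by rw [hd1Z, hck]; ring
      exact_mod_cast this
    have hkN : k < 2 ^ n₂ := by
      have hpow : 2 ^ (m - n₁) = 2 ^ (n₂ - n₁) * K := by
        rw [hKdef, ← pow_add]; congr 1; omega
      have h1 : k * K < 2 ^ (n₂ - n₁) * K := by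
        calc k * K ≤ d₁ := by omega
          _ < 2 ^ (m - n₁) := hd₁
          _ = 2 ^ (n₂ - n₁) * K := hpow
      have h2' : k < 2 ^ (n₂ - n₁) := by
        by_contra hcon
        push_neg at hcon
        have := mul_le_mul_of_nonneg_right hcon (Nat.zero_le K)
        omega
      calc k < 2 ^ (n₂ - n₁) := h2'
        _ ≤ 2 ^ n₂ := Nat.pow_le_pow_right (by norm_num) (by omega)
    have mem1 : d₁ ∈ (Finset.range (2 ^ n₁)).image (fun j => d₁ + j * 2 ^ (m - n₁)) :=
      Finset.mem_image.mpr ⟨0, Finset.mem_range.mpr (Nat.pow_pos (by norm_num)), by simp⟩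
    have mem2 : d₁ ∈ (Finset.range (2 ^ n₂)).image (fun j => d₂ + j * 2 ^ (m - n₂)) :=
      Finset.mem_image.mpr ⟨k, Finset.mem_range.mpr hkN, by rw [← hKdef]; omega⟩
    exact Finset.disjoint_left.mp hdisj mem1 mem2
  -- cast facts
  have hMC : ((2 ^ m : ℕ) : ℂ) = (K : ℂ) * N := by
    push_cast [hKdef, hNdef, ← pow_add]
    congr 1
    omega
  have hM0 : ((2 ^ m : ℕ) : ℂ) ≠ 0 := Nat.cast_ne_zero.mpr (by positivity)
  have hK0 : ((K : ℕ) : ℂ) ≠ 0 := Nat.cast_ne_zero.mpr hKpos.ne'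
  have hN0 : ((N : ℕ) : ℂ) ≠ 0 := Nat.cast_ne_zero.mpr (by positivity)
  -- reindex
  have hrange : Finset.range (2 ^ m) = Finset.range (K * N) := by
    congr 1
    rw [hKdef, hNdef, ← pow_add]
    congr 1
    omega
  set ζ : ℂ := Complex.exp (2 * Real.pi * Complex.I * ((d₁ : ℤ) - d₂) / K) with hζdef
  set g : ℕ → ℂ := fun a =>
    ((2 ^ n₁ : ℂ) / (2 ^ m : ℂ)) * ((2 ^ n₂ : ℂ) / (2 ^ m : ℂ)) *
      Complex.exp (2 * Real.pi * Complex.I * a * ((d₁ : ℤ) - d₂) / ((2 ^ m : ℕ) : ℂ)) *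
      x₁ (a % 2 ^ n₁) * (starRingEnd ℂ) (x₂ a) with hgdef
  rw [hrange]
  have reindex :
      ∑ ℓ ∈ Finset.range (K * N),
        (((2 ^ n₁ : ℂ) / (2 ^ m : ℂ)) *
            Complex.exp (2 * Real.pi * Complex.I * ℓ * d₁ / ((2 ^ m : ℕ) : ℂ)) *
            x₁ (ℓ % 2 ^ n₁)) *
          (starRingEnd ℂ)
            (((2 ^ n₂ : ℂ) / (2 ^ m : ℂ)) *
              Complex.exp (2 * Real.pi * Complex.I * ℓ * d₂ / ((2 ^ m : ℕ) : ℂ)) *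
              x₂ (ℓ % 2 ^ n₂))
      = ∑ b ∈ Finset.range K, ∑ a ∈ Finset.range N,
        (((2 ^ n₁ : ℂ) / (2 ^ m : ℂ)) *
            Complex.exp (2 * Real.pi * Complex.I * (b * N + a : ℕ) * d₁ / ((2 ^ m : ℕ) : ℂ)) *
            x₁ ((b * N + a) % 2 ^ n₁)) *
          (starRingEnd ℂ)
            (((2 ^ n₂ : ℂ) / (2 ^ m : ℂ)) *
              Complex.exp (2 * Real.pi * Complex.I * (b * N + a : ℕ) * d₂ / ((2 ^ m : ℕ) : ℂ)) *
              x₂ ((b * N + a) % 2 ^ n₂)) := by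
    rw [← Finset.sum_product']
    refine Finset.sum_nbij' (fun ℓ => (ℓ / N, ℓ % N)) (fun p => p.1 * N + p.2) ?_ ?_ ?_ ?_ ?_
    · intro ℓ hℓ
      simp only [Finset.mem_range] at hℓ
      simp only [Finset.mem_product, Finset.mem_range]
      have hℓ' : ℓ < N * K := by rw [mul_comm]; exact hℓ
      exact ⟨Nat.div_lt_of_lt_mul hℓ', Nat.mod_lt _ (by positivity)⟩
    · intro p hp
      simp only [Finset.mem_product, Finset.mem_range] at hp
      simp only [Finset.mem_range]
      calc p.1 * N + p.2 < p.1 * N + N := by omega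
        _ = (p.1 + 1) * N := by ring
        _ ≤ K * N := Nat.mul_le_mul_right _ (by omega)
    · intro ℓ _
      show ℓ / N * N + ℓ % N = ℓ
      rw [mul_comm]
      exact Nat.div_add_mod ℓ N
    · intro p hp
      simp only [Finset.mem_product, Finset.mem_range] at hp
      have h1 : (p.1 * N + p.2) / N = p.1 := by
        rw [mul_comm, Nat.mul_add_div hNpos, Nat.div_eq_of_lt hp.2]
        omega
      have h2 : (p.1 * N + p.2) % N = p.2 := by
        rw [Nat.add_comm, Nat.add_mul_mod_self_right, Nat.mod_eq_of_lt hp.2]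
      simp [h1, h2]
    · intro ℓ _
      have hid : ℓ / N * N + ℓ % N = ℓ := by rw [mul_comm]; exact Nat.div_add_mod ℓ N
      dsimp only
      rw [hid]
  rw [reindex]
  have key : ∀ b ∈ Finset.range K, ∀ a ∈ Finset.range N,
      (((2 ^ n₁ : ℂ) / (2 ^ m : ℂ)) *
          Complex.exp (2 * Real.pi * Complex.I * (b * N + a : ℕ) * d₁ / ((2 ^ m : ℕ) : ℂ)) *
          x₁ ((b * N + a) % 2 ^ n₁)) *
        (starRingEnd ℂ)
          (((2 ^ n₂ : ℂ) / (2 ^ m : ℂ)) *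
            Complex.exp (2 * Real.pi * Complex.I * (b * N + a : ℕ) * d₂ / ((2 ^ m : ℕ) : ℂ)) *
            x₂ ((b * N + a) % 2 ^ n₂)) = g a * ζ ^ b := by
    intro b hb a ha
    simp only [Finset.mem_range] at hb ha
    have hmod2 : (b * N + a) % 2 ^ n₂ = a := by
      rw [← hNdef, Nat.add_comm, Nat.add_mul_mod_self_right, Nat.mod_eq_of_lt ha]
    have hmod1 : (b * N + a) % 2 ^ n₁ = a % 2 ^ n₁ := by
      have : b * N = b * 2 ^ (n₂ - n₁) * 2 ^ n₁ := by
        rw [hNdef, mul_assoc, ← pow_add]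
        congr 2
        omega
      rw [this, Nat.add_comm, Nat.add_mul_mod_self_right]
    rw [hmod1, hmod2]
    have hconjc : (starRingEnd ℂ) ((2 ^ n₂ : ℂ) / (2 ^ m : ℂ)) = (2 ^ n₂ : ℂ) / (2 ^ m : ℂ) := by
      simp [map_div₀, Complex.conj_ofNat]
    have hconje : (starRingEnd ℂ)
        (Complex.exp (2 * Real.pi * Complex.I * (b * N + a : ℕ) * d₂ / ((2 ^ m : ℕ) : ℂ)))
        = Complex.exp (-(2 * Real.pi * Complex.I * (b * N + a : ℕ) * d₂ / ((2 ^ m : ℕ) : ℂ))) := by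
      rw [← Complex.exp_conj]
      congr 1
      simp [map_div₀, Complex.conj_ofNat]
      ring
    rw [map_mul, map_mul, hconjc, hconje]
    have hexp : Complex.exp (2 * Real.pi * Complex.I * (b * N + a : ℕ) * d₁ / ((2 ^ m : ℕ) : ℂ)) *
        Complex.exp (-(2 * Real.pi * Complex.I * (b * N + a : ℕ) * d₂ / ((2 ^ m : ℕ) : ℂ)))
        = Complex.exp (2 * Real.pi * Complex.I * a * ((d₁ : ℤ) - d₂) / ((2 ^ m : ℕ) : ℂ)) * ζ ^ b := by
      rw [hζdef, ← Complex.exp_nat_mul, ← Complex.exp_add, ← Complex.exp_add]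
      congr 1
      rw [hMC]
      push_cast
      field_simp
      ring
    rw [hgdef]
    calc _ = ((2 ^ n₁ : ℂ) / (2 ^ m : ℂ)) * ((2 ^ n₂ : ℂ) / (2 ^ m : ℂ)) *
          (Complex.exp (2 * Real.pi * Complex.I * (b * N + a : ℕ) * d₁ / ((2 ^ m : ℕ) : ℂ)) *
          Complex.exp (-(2 * Real.pi * Complex.I * (b * N + a : ℕ) * d₂ / ((2 ^ m : ℕ) : ℂ)))) *
          x₁ (a % 2 ^ n₁) * (starRingEnd ℂ) (x₂ a) := by ring
      _ = _ := by rw [hexp]; ring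
  rw [Finset.sum_congr rfl (fun b hb => Finset.sum_congr rfl (fun a ha => key b hb a ha))]
  have : ∑ b ∈ Finset.range K, ∑ a ∈ Finset.range N, g a * ζ ^ b
      = (∑ a ∈ Finset.range N, g a) * ∑ b ∈ Finset.range K, ζ ^ b := by
    rw [Finset.mul_sum]
    refine Finset.sum_congr rfl fun b _ => ?_
    rw [← Finset.sum_mul]
  rw [this]
  have hgeo := geom_exp_zero K ((d₁ : ℤ) - (d₂ : ℤ)) hKpos ht
  push_cast at hgeo
  have hz : ∑ b ∈ Finset.range K, ζ ^ b = 0 := by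
    rw [hζdef]
    push_cast
    exact hgeo
  rw [hz, mul_zero]

theorem stmt13 (m n₁ n₂ : ℕ) (h₁ : n₁ ≤ m) (h₂ : n₂ ≤ m)
    (d₁ d₂ : ℕ) (hd₁ : d₁ < 2 ^ (m - n₁)) (hd₂ : d₂ < 2 ^ (m - n₂))
    (hdisj : Disjoint
      ((Finset.range (2 ^ n₁)).image (fun j => d₁ + j * 2 ^ (m - n₁)))
      ((Finset.range (2 ^ n₂)).image (fun j => d₂ + j * 2 ^ (m - n₂))))
    (x₁ x₂ : ℕ → ℂ) :
    ∑ ℓ ∈ Finset.range (2 ^ m),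
      (((2 ^ n₁ : ℂ) / (2 ^ m : ℂ)) *
          Complex.exp (2 * Real.pi * Complex.I * ℓ * d₁ / ((2 ^ m : ℕ) : ℂ)) *
          x₁ (ℓ % 2 ^ n₁)) *
        (starRingEnd ℂ)
          (((2 ^ n₂ : ℂ) / (2 ^ m : ℂ)) *
            Complex.exp (2 * Real.pi * Complex.I * ℓ * d₂ / ((2 ^ m : ℕ) : ℂ)) *
            x₂ (ℓ % 2 ^ n₂)) = 0 := by
  rcases le_total n₁ n₂ with hle | hle
  · exact aux13 m n₁ n₂ h₁ h₂ hle d₁ d₂ hd₁ hd₂ hdisj x₁ x₂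
  · have h0 := aux13 m n₂ n₁ h₂ h₁ hle d₂ d₁ hd₂ hd₁ hdisj.symm x₂ x₁
    have hc : ∑ ℓ ∈ Finset.range (2 ^ m),
      (((2 ^ n₁ : ℂ) / (2 ^ m : ℂ)) *
          Complex.exp (2 * Real.pi * Complex.I * ℓ * d₁ / ((2 ^ m : ℕ) : ℂ)) *
          x₁ (ℓ % 2 ^ n₁)) *
        (starRingEnd ℂ)
          (((2 ^ n₂ : ℂ) / (2 ^ m : ℂ)) *
            Complex.exp (2 * Real.pi * Complex.I * ℓ * d₂ / ((2 ^ m : ℕ) : ℂ)) *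
            x₂ (ℓ % 2 ^ n₂))
      = (starRingEnd ℂ) (∑ ℓ ∈ Finset.range (2 ^ m),
      (((2 ^ n₂ : ℂ) / (2 ^ m : ℂ)) *
          Complex.exp (2 * Real.pi * Complex.I * ℓ * d₂ / ((2 ^ m : ℕ) : ℂ)) *
          x₂ (ℓ % 2 ^ n₂)) *
        (starRingEnd ℂ)
          (((2 ^ n₁ : ℂ) / (2 ^ m : ℂ)) *
            Complex.exp (2 * Real.pi * Complex.I * ℓ * d₁ / ((2 ^ m : ℕ) : ℂ)) *
            x₁ (ℓ % 2 ^ n₁))) := by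
      rw [map_sum]
      refine Finset.sum_congr rfl fun ℓ _ => ?_
      simp only [map_mul, Complex.conj_conj]
      ring
    rw [hc, h0, map_zero]
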